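/- With $I_0(q) = \sum_{d\geq0} \frac{(3d)!}{(d!)^3} q^d$, $L = (1-27q)^{-1/3}$, $X_1 = L^{-1} q\frac{d}{dq}\ln(I_0/L)$, $X_2 = (L^{-1}q\frac{d}{dq})^2 \ln(I_0/L)$, and $Y_2 = (L^{-1}q\frac{d}{dq})^2 \ln(q^{1/3} L)$, the relation $X_2 = -X_1^2 - \frac{1}{2} Y_2$ holds. -/

import Mathlib

open PowerSeries

/-- The logarithmic derivative operator `D = q d/dq` on formal power series. -/
noncomputable def logD (f : PowerSeries ℚ) : PowerSeries ℚ :=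
  PowerSeries.X * PowerSeries.derivative ℚ f

/-- `I₀(q) = ∑_{d≥0} (3d)!/(d!)³ qᵈ`. -/
noncomputable def I0 : PowerSeries ℚ :=
  PowerSeries.mk fun d => ((3 * d).factorial : ℚ) / ((d.factorial : ℚ)) ^ 3


lemma logD_add (f g : ℚ⟦X⟧) : logD (f + g) = logD f + logD g := by
  unfold logD; rw [map_add]; ring

lemma logD_sub (f g : ℚ⟦X⟧) : logD (f - g) = logD f - logD g := by
  unfold logD; rw [map_sub]; ring

lemma logD_mul (f g : ℚ⟦X⟧) : logD (f * g) = logD f * g + f * logD g := by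
  unfold logD; rw [Derivation.leibniz, smul_eq_mul, smul_eq_mul]; ring

lemma logD_C (r : ℚ) : logD (C (R := ℚ) r) = 0 := by
  unfold logD; simp

lemma logD_one : logD 1 = 0 := by unfold logD; simp

lemma logD_pow (f : ℚ⟦X⟧) (n : ℕ) : logD (f ^ n) = n * f ^ (n - 1) * logD f := by
  unfold logD
  rw [Derivation.leibniz_pow, smul_eq_mul, nsmul_eq_mul]
  ring

lemma logD_inv (f : ℚ⟦X⟧) : logD f⁻¹ = -(f⁻¹ ^ 2) * logD f := by
  unfold logD; rw [PowerSeries.derivative_inv']; ring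

lemma coeff_logD (f : ℚ⟦X⟧) (n : ℕ) : coeff n (logD f) = n * coeff n f := by
  unfold logD
  cases n with
  | zero => simp
  | succ n => rw [coeff_succ_X_mul, coeff_derivative]; push_cast; ring

lemma coeff_I0 (n : ℕ) : coeff n I0 = ((3 * n).factorial : ℚ) / ((n.factorial : ℚ)) ^ 3 := by
  unfold I0; rw [coeff_mk]

lemma I0_rec (n : ℕ) : coeff (n+1) I0 * ((n:ℚ)+1)^3 = (3*(n:ℚ)+3)*(3*n+2)*(3*n+1) * coeff n I0 := by
  rw [coeff_I0, coeff_I0]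
  have h1 : (3 * (n+1)) = (3*n+2)+1 := by ring
  have h2 : ((3*(n+1)).factorial : ℚ) = (3*(n:ℚ)+3)*(3*n+2)*(3*n+1)*((3*n).factorial : ℚ) := by
    rw [h1, Nat.factorial_succ, Nat.factorial_succ, Nat.factorial_succ]
    push_cast; ring
  have h3 : (((n+1).factorial : ℚ)) = ((n:ℚ)+1) * (n.factorial : ℚ) := by
    rw [Nat.factorial_succ]; push_cast; ring
  have hf : ((n.factorial : ℚ)) ≠ 0 := by positivity
  have hn1 : ((n:ℚ)+1) ≠ 0 := by positivity
  rw [h2, h3]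
  field_simp

lemma I0_ode : logD (logD I0) = 27 * X * logD (logD I0) + 27 * X * logD I0 + 6 * X * I0 := by
  ext n
  cases n with
  | zero => simp [coeff_logD]
  | succ n =>
    rw [map_add, map_add, coeff_logD, coeff_logD]
    have hx : ∀ f : ℚ⟦X⟧, ∀ c : ℚ⟦X⟧, c = 27 ∨ c = 6 → True := fun _ _ _ => trivial
    rw [show (27 : ℚ⟦X⟧) * X * logD (logD I0) = X * (27 * logD (logD I0)) by ring,
        show (27 : ℚ⟦X⟧) * X * logD I0 = X * (27 * logD I0) by ring,
        show (6 : ℚ⟦X⟧) * X * I0 = X * (6 * I0) by ring,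
        coeff_succ_X_mul, coeff_succ_X_mul, coeff_succ_X_mul]
    have h27 : coeff n ((27:ℚ⟦X⟧) * logD (logD I0)) = 27 * ((n:ℚ) * ((n:ℚ) * coeff n I0)) := by
      rw [(map_ofNat (C (R := ℚ)) 27).symm, coeff_C_mul, coeff_logD, coeff_logD]
    have h27' : coeff n ((27:ℚ⟦X⟧) * logD I0) = 27 * ((n:ℚ) * coeff n I0) := by
      rw [(map_ofNat (C (R := ℚ)) 27).symm, coeff_C_mul, coeff_logD]
    have h6 : coeff n ((6:ℚ⟦X⟧) * I0) = 6 * coeff n I0 := by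
      rw [(map_ofNat (C (R := ℚ)) 6).symm, coeff_C_mul]
    rw [h27, h27', h6]
    have key := I0_rec n
    have hn1 : ((n:ℚ)+1) ≠ 0 := by positivity
    push_cast
    apply mul_left_cancel₀ hn1
    linear_combination key

lemma logD_X27 : logD (27 * X) = 27 * X := by
  unfold logD
  rw [show ((27:ℚ⟦X⟧)) = C (R := ℚ) 27 from (map_ofNat (C (R := ℚ)) 27).symm]
  simp; ring

/-- with `L = (1-27q)^{-1/3}`,
`X₁ = L⁻¹ q d/dq ln(I₀/L) = L⁻¹ (D I₀/I₀ - D L/L)`,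
`X₂ = L⁻¹ D X₁`, `Y₁ = L⁻¹ q d/dq ln(q^{1/3} L) = L⁻¹ (1/3 + D L/L)` and
`Y₂ = L⁻¹ D Y₁`, the relation `X₂ = -X₁² - (1/2) Y₂` holds. -/
theorem X2_relation (L : PowerSeries ℚ)
    (hL : L ^ 3 * (1 - 27 * PowerSeries.X) = 1)
    (hL0 : PowerSeries.constantCoeff L = 1)
    (X1 X2 Y1 Y2 : PowerSeries ℚ)
    (hX1 : X1 = L⁻¹ * (logD I0 * I0⁻¹ - logD L * L⁻¹))
    (hX2 : X2 = L⁻¹ * logD X1)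
    (hY1 : Y1 = L⁻¹ * (PowerSeries.C (1/3 : ℚ) + logD L * L⁻¹))
    (hY2 : Y2 = L⁻¹ * logD Y1) :
    X2 = -X1 ^ 2 - PowerSeries.C (1/2 : ℚ) * Y2 := by
  subst hX1 hX2 hY1 hY2
  have hIc : constantCoeff (R := ℚ) I0 = 1 := by unfold I0; simp
  have hLi : L * L⁻¹ = 1 := PowerSeries.mul_inv_cancel L (by rw [hL0]; norm_num)
  have hIi : I0 * I0⁻¹ = 1 := PowerSeries.mul_inv_cancel I0 (by rw [hIc]; norm_num)
  have h27 : 27 * X * L ^ 3 = L ^ 3 - 1 := by linear_combination -hL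
  have hc3 : (3:ℚ⟦X⟧) * C (R := ℚ) (1/3) = 1 := by
    rw [show ((3:ℚ⟦X⟧)) = C (R := ℚ) 3 from (map_ofNat (C (R := ℚ)) 3).symm, ← map_mul]
    norm_num
  have hc2 : (2:ℚ⟦X⟧) * C (R := ℚ) (1/2) = 1 := by
    rw [show ((2:ℚ⟦X⟧)) = C (R := ℚ) 2 from (map_ofNat (C (R := ℚ)) 2).symm, ← map_mul]
    norm_num
  have hc9 : (9:ℚ⟦X⟧) * C (R := ℚ) (2/9) = 2 := by
    rw [show ((9:ℚ⟦X⟧)) = C (R := ℚ) 9 from (map_ofNat (C (R := ℚ)) 9).symm, ← map_mul,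
        show ((2:ℚ⟦X⟧)) = C (R := ℚ) 2 from (map_ofNat (C (R := ℚ)) 2).symm]
    norm_num
  have hder := congrArg logD hL
  rw [logD_mul, logD_one, logD_pow, logD_sub, logD_one, logD_X27] at hder
  push_cast at hder
  -- hder : 3 * L^2 * logD L * (1 - 27*X) + L^3 * (0 - 27*X) = 0
  have hdL : logD L = C (R := ℚ) (1/3) * (L ^ 4 - L) := by
    linear_combination (C (R := ℚ) (1/3) * L) * hder - (3 * C (R := ℚ) (1/3) * logD L) * hL + (C (R := ℚ) (1/3) * L) * h27 - logD L * hc3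
  have hd2L := congrArg logD hdL
  rw [logD_mul, logD_C, logD_sub, logD_pow] at hd2L
  push_cast at hd2L
  have hdu : logD (logD I0) =
      (L ^ 3 - 1) * logD I0 + C (R := ℚ) (2/9) * ((L ^ 3 - 1) * I0) := by
    linear_combination L ^ 3 * I0_ode - logD (logD I0) * hL + logD I0 * h27 + C (R := ℚ) (2/9) * I0 * h27 - 3 * X * L ^ 3 * I0 * hc9
  simp only [logD_mul, logD_sub, logD_add, logD_C, logD_inv]
  rw [hdu, hd2L, hdL]
  have h162 : (162:ℚ⟦X⟧) ≠ 0 := by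
    intro h
    have h2 := congrArg (constantCoeff (R := ℚ)) h
    rw [map_ofNat, map_zero] at h2
    norm_num at h2
  apply mul_left_cancel₀ (a := (162:ℚ⟦X⟧)) h162
  linear_combination ((324 : ℚ⟦X⟧) * L⁻¹ ^ 2 * (C (R := ℚ) (1/3) : ℚ⟦X⟧) ^ 2 + (486 : ℚ⟦X⟧) * L⁻¹ ^ 2 * I0⁻¹ * logD I0 * (C (R := ℚ) (1/3) : ℚ⟦X⟧) + (-162 : ℚ⟦X⟧) * L * (C (R := ℚ) (1/3) : ℚ⟦X⟧) ^ 2 + (-324 : ℚ⟦X⟧) * L * (C (R := ℚ) (1/3) : ℚ⟦X⟧) ^ 2 * (C (R := ℚ) (1/2) : ℚ⟦X⟧) + (162 : ℚ⟦X⟧) * L * I0⁻¹ * logD I0 + (-486 : ℚ⟦X⟧) * L * I0⁻¹ * logD I0 * (C (R := ℚ) (1/3) : ℚ⟦X⟧) + (162 : ℚ⟦X⟧) * L * I0 * I0⁻¹ * (C (R := ℚ) (2/9) : ℚ⟦X⟧) + (486 : ℚ⟦X⟧) * L * L⁻¹ ^ 3 * (C (R := ℚ) (1/3) : ℚ⟦X⟧)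 ^ 2 + (-324 : ℚ⟦X⟧) * L * L⁻¹ ^ 3 * (C (R := ℚ) (1/3) : ℚ⟦X⟧) ^ 2 * (C (R := ℚ) (1/2) : ℚ⟦X⟧) + (-162 : ℚ⟦X⟧) * L ^ 2 * L⁻¹ * (C (R := ℚ) (1/3) : ℚ⟦X⟧) ^ 2 + (-324 : ℚ⟦X⟧) * L ^ 2 * L⁻¹ * (C (R := ℚ) (1/3) : ℚ⟦X⟧) ^ 2 * (C (R := ℚ) (1/2) : ℚ⟦X⟧) + (162 : ℚ⟦X⟧) * L ^ 2 * L⁻¹ * I0⁻¹ * logD I0 + (-486 : ℚ⟦X⟧) * L ^ 2 * L⁻¹ * I0⁻¹ * logD I0 * (C (R := ℚ) (1/3) : ℚ⟦X⟧) + (162 : ℚ⟦X⟧) * L ^ 2 * L⁻¹ * I0 * I0⁻¹ * (C (R := ℚ) (2/9) : ℚ⟦X⟧) + (-162 : ℚ⟦X⟧) * L ^ 3 * L⁻¹ ^ 2 * (C (R := ℚ) (1/3) : ℚ⟦X⟧) ^ 2 + (-324 : ℚ⟦X⟧) * L ^ 3 * L⁻¹ ^ 2 * (C (R := ℚ) (1/3)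 : ℚ⟦X⟧) ^ 2 * (C (R := ℚ) (1/2) : ℚ⟦X⟧) + (-486 : ℚ⟦X⟧) * L ^ 3 * L⁻¹ ^ 2 * I0⁻¹ * logD I0 * (C (R := ℚ) (1/3) : ℚ⟦X⟧) + (-162 : ℚ⟦X⟧) * L ^ 4 * (C (R := ℚ) (1/3) : ℚ⟦X⟧) ^ 2 + (324 : ℚ⟦X⟧) * L ^ 4 * (C (R := ℚ) (1/3) : ℚ⟦X⟧) ^ 2 * (C (R := ℚ) (1/2) : ℚ⟦X⟧) + (-972 : ℚ⟦X⟧) * L ^ 4 * L⁻¹ ^ 3 * (C (R := ℚ) (1/3) : ℚ⟦X⟧) ^ 2 + (648 : ℚ⟦X⟧) * L ^ 4 * L⁻¹ ^ 3 * (C (R := ℚ) (1/3) : ℚ⟦X⟧) ^ 2 * (C (R := ℚ) (1/2) : ℚ⟦X⟧) + (-162 : ℚ⟦X⟧) * L ^ 5 * L⁻¹ * (C (R := ℚ) (1/3) : ℚ⟦X⟧) ^ 2 + (324 : ℚ⟦X⟧) * L ^ 5 * L⁻¹ * (C (R := ℚ) (1/3) : ℚ⟦X⟧) ^ 2 * (C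 (R := ℚ) (1/2) : ℚ⟦X⟧) + (-162 : ℚ⟦X⟧) * L ^ 6 * L⁻¹ ^ 2 * (C (R := ℚ) (1/3) : ℚ⟦X⟧) ^ 2 + (324 : ℚ⟦X⟧) * L ^ 6 * L⁻¹ ^ 2 * (C (R := ℚ) (1/3) : ℚ⟦X⟧) ^ 2 * (C (R := ℚ) (1/2) : ℚ⟦X⟧) + (486 : ℚ⟦X⟧) * L ^ 7 * L⁻¹ ^ 3 * (C (R := ℚ) (1/3) : ℚ⟦X⟧) ^ 2 + (-324 : ℚ⟦X⟧) * L ^ 7 * L⁻¹ ^ 3 * (C (R := ℚ) (1/3) : ℚ⟦X⟧) ^ 2 * (C (R := ℚ) (1/2) : ℚ⟦X⟧)) * hLi + ((-162 : ℚ⟦X⟧) * L⁻¹ ^ 2 * (C (R := ℚ) (2/9) : ℚ⟦X⟧) + (162 : ℚ⟦X⟧) * L * (C (R := ℚ) (2/9) : ℚ⟦X⟧)) * hIi + ((36 : ℚ⟦X⟧) * L⁻¹ ^ 2 + (108 : ℚ⟦X⟧) * L⁻¹ ^ 2 * (C (R := ℚ) (1/3) : ℚ⟦X⟧) + (162 :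 ℚ⟦X⟧) * L⁻¹ ^ 2 * I0⁻¹ * logD I0 + (-18 : ℚ⟦X⟧) * L + (-36 : ℚ⟦X⟧) * L * (C (R := ℚ) (1/2) : ℚ⟦X⟧) + (-54 : ℚ⟦X⟧) * L * (C (R := ℚ) (1/3) : ℚ⟦X⟧) + (-108 : ℚ⟦X⟧) * L * (C (R := ℚ) (1/3) : ℚ⟦X⟧) * (C (R := ℚ) (1/2) : ℚ⟦X⟧) + (-162 : ℚ⟦X⟧) * L * I0⁻¹ * logD I0 + (-18 : ℚ⟦X⟧) * L ^ 4 + (36 : ℚ⟦X⟧) * L ^ 4 * (C (R := ℚ) (1/2) : ℚ⟦X⟧) + (-54 : ℚ⟦X⟧) * L ^ 4 * (C (R := ℚ) (1/3) : ℚ⟦X⟧) + (108 : ℚ⟦X⟧) * L ^ 4 * (C (R := ℚ) (1/3) : ℚ⟦X⟧) * (C (R := ℚ) (1/2) : ℚ⟦X⟧)) * hc3 + ((-18 : ℚ⟦X⟧) * L + (18 : ℚ⟦X⟧) * L ^ 4) * hc2 + ((-18 : ℚ⟦X⟧) * L⁻¹ ^ 2 + (18 : ℚ⟦X⟧) * L)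 * hc9
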